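/- Twisting preserves the Leibniz rule: let Ω be an H-bicovariant bimodule and d : H → Ω a k-linear map satisfying the Leibniz rule d(hg) = (dh)·g + h·(dg) and which is a bicomodule map, i.e. β_L∘d = (id⊗d)∘Δ and β_R∘d = (d⊗id)∘Δ. Let χ : H⊗H → k be a unital 2-cocycle, let h • g = χ(h₁⊗g₁)·h₂g₂·χ⁻¹(h₃⊗g₃) be the twisted product on H, and let the twisted module structures on Ω be h • v = χ(h₁⊗v₍1₎)·h₂·v₍2̲₎·χ⁻¹(h₃⊗v₍3₎) and v • h = χ(v₍1₎⊗h₁)·v₍2̲₎·h₂·χ⁻¹(v₍3₎⊗h₃), where (id⊗β_R)∘β_L(v) = v₍1₎⊗v₍2̲₎⊗v₍3₎. Then d(h • g) = (dh) • g + h • (dg) for all h, g ∈ H. -/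

import Mathlib

open scoped TensorProduct
open TensorProduct LinearMap

namespace PaperTwist

variable (k H : Type) [Field k] [Ring H] [HopfAlgebra k H]

/-- The comultiplication of `H`. -/
noncomputable def Δ : H →ₗ[k] H ⊗[k] H := Coalgebra.comul

/-- The twofold iterated comultiplication `h ↦ h₁ ⊗ (h₂ ⊗ h₃)`. -/
noncomputable def Δ₂ : H →ₗ[k] H ⊗[k] (H ⊗[k] H) := (LinearMap.lTensor H (Δ k H)) ∘ₗ (Δ k H)

/-- The counit of `H`. -/
noncomputable def ε : H →ₗ[k] k := Coalgebra.counit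

/-- The antipode of `H`. -/
noncomputable def S : H →ₗ[k] H := HopfAlgebra.antipode k

/-- `χ : H ⊗ H → k` is a unital 2-cocycle with convolution inverse `χ'`:
`χ(h₁⊗g₁)χ⁻¹(h₂⊗g₂) = ε(h)ε(g) = χ⁻¹(h₁⊗g₁)χ(h₂⊗g₂)`,
`χ(g₁⊗f₁)χ(h⊗g₂f₂) = χ(h₁⊗g₁)χ(h₂g₂⊗f)` and `χ(1⊗h) = ε(h) = χ(h⊗1)`,
all Sweedler sums being expressed via arbitrary finite representations of coproducts. -/
def IsFunCocycle (χ χ' : H ⊗[k] H →ₗ[k] k) : Prop :=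
  (∀ (h g : H) (ι κ : Type) (s : Finset ι) (t : Finset κ) (h1 h2 : ι → H) (g1 g2 : κ → H),
    Δ k H h = ∑ i ∈ s, h1 i ⊗ₜ[k] h2 i → Δ k H g = ∑ j ∈ t, g1 j ⊗ₜ[k] g2 j →
    ((∑ i ∈ s, ∑ j ∈ t, χ (h1 i ⊗ₜ[k] g1 j) * χ' (h2 i ⊗ₜ[k] g2 j) = ε k H h * ε k H g) ∧
     (∑ i ∈ s, ∑ j ∈ t, χ' (h1 i ⊗ₜ[k] g1 j) * χ (h2 i ⊗ₜ[k] g2 j) = ε k H h * ε k H g))) ∧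
  (∀ (h g f : H) (ι κ μ : Type) (s : Finset ι) (t : Finset κ) (u : Finset μ)
      (h1 h2 : ι → H) (g1 g2 : κ → H) (f1 f2 : μ → H),
    Δ k H h = ∑ i ∈ s, h1 i ⊗ₜ[k] h2 i → Δ k H g = ∑ j ∈ t, g1 j ⊗ₜ[k] g2 j →
    Δ k H f = ∑ l ∈ u, f1 l ⊗ₜ[k] f2 l →
    ∑ j ∈ t, ∑ l ∈ u, χ (g1 j ⊗ₜ[k] f1 l) * χ (h ⊗ₜ[k] (g2 j * f2 l))
      = ∑ i ∈ s, ∑ j ∈ t, χ (h1 i ⊗ₜ[k] g1 j) * χ ((h2 i * g2 j) ⊗ₜ[k] f)) ∧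
  (∀ h : H, χ ((1 : H) ⊗ₜ[k] h) = ε k H h ∧ χ (h ⊗ₜ[k] (1 : H)) = ε k H h)

/-- `m` is the twisted product `h • g = χ(h₁⊗g₁)·h₂g₂·χ⁻¹(h₃⊗g₃)` on `H`, expressed via
arbitrary finite representations of the iterated coproducts. -/
def IsTwistedProduct (χ χ' : H ⊗[k] H →ₗ[k] k) (m : H →ₗ[k] H →ₗ[k] H) : Prop :=
  ∀ (h g : H) (ι κ : Type) (s : Finset ι) (t : Finset κ)
    (h1 h2 h3 : ι → H) (g1 g2 g3 : κ → H),
    Δ₂ k H h = ∑ i ∈ s, h1 i ⊗ₜ[k] (h2 i ⊗ₜ[k] h3 i) →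
    Δ₂ k H g = ∑ j ∈ t, g1 j ⊗ₜ[k] (g2 j ⊗ₜ[k] g3 j) →
    m h g = ∑ i ∈ s, ∑ j ∈ t, (χ (h1 i ⊗ₜ[k] g1 j) * χ' (h3 i ⊗ₜ[k] g3 j)) • (h2 i * g2 j)

variable (Ω : Type) [AddCommGroup Ω] [Module k Ω]

/-- An `H`-bicovariant bimodule: an `H`-bimodule `Ω` (with left action `aL` and right action
`aR`) together with commuting counital coassociative left and right coactions `βL, βR`
that are bimodule maps. -/
structure IsBicovariantBimodule (aL aR : H →ₗ[k] Ω →ₗ[k] Ω)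
    (βL : Ω →ₗ[k] H ⊗[k] Ω) (βR : Ω →ₗ[k] Ω ⊗[k] H) : Prop where
  actL_one : ∀ v : Ω, aL 1 v = v
  actL_mul : ∀ (g h : H) (v : Ω), aL (g * h) v = aL g (aL h v)
  actR_one : ∀ v : Ω, aR 1 v = v
  actR_mul : ∀ (g h : H) (v : Ω), aR (g * h) v = aR h (aR g v)
  act_comm : ∀ (g h : H) (v : Ω), aL g (aR h v) = aR h (aL g v)
  βL_counit : ∀ v : Ω, (TensorProduct.lid k Ω) ((LinearMap.rTensor Ω (ε k H)) (βL v)) = v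
  βL_coassoc : ∀ v : Ω,
    (LinearMap.rTensor Ω (Δ k H)) (βL v)
      = (TensorProduct.assoc k H H Ω).symm ((LinearMap.lTensor H βL) (βL v))
  βR_counit : ∀ v : Ω, (TensorProduct.rid k Ω) ((LinearMap.lTensor Ω (ε k H)) (βR v)) = v
  βR_coassoc : ∀ v : Ω,
    (LinearMap.lTensor Ω (Δ k H)) (βR v)
      = (TensorProduct.assoc k Ω H H) ((LinearMap.rTensor H βR) (βR v))
  coact_comm : ∀ v : Ω,
    (LinearMap.lTensor H βR) (βL v)
      = (TensorProduct.assoc k H Ω H) ((LinearMap.rTensor H βL) (βR v))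
  βL_bimod : ∀ (h g : H) (v : Ω) (ι κ : Type) (s : Finset ι) (t : Finset κ)
      (h1 h2 : ι → H) (g1 g2 : κ → H),
    Δ k H h = ∑ i ∈ s, h1 i ⊗ₜ[k] h2 i → Δ k H g = ∑ j ∈ t, g1 j ⊗ₜ[k] g2 j →
    βL (aR g (aL h v))
      = ∑ i ∈ s, ∑ j ∈ t,
          (TensorProduct.map ((LinearMap.mulLeft k (h1 i)) ∘ₗ (LinearMap.mulRight k (g1 j)))
            ((aR (g2 j)) ∘ₗ (aL (h2 i)))) (βL v)
  βR_bimod : ∀ (h g : H) (v : Ω) (ι κ : Type) (s : Finset ι) (t : Finset κ)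
      (h1 h2 : ι → H) (g1 g2 : κ → H),
    Δ k H h = ∑ i ∈ s, h1 i ⊗ₜ[k] h2 i → Δ k H g = ∑ j ∈ t, g1 j ⊗ₜ[k] g2 j →
    βR (aR g (aL h v))
      = ∑ i ∈ s, ∑ j ∈ t,
          (TensorProduct.map ((aR (g1 j)) ∘ₗ (aL (h1 i)))
            ((LinearMap.mulLeft k (h2 i)) ∘ₗ (LinearMap.mulRight k (g2 j)))) (βR v)

/-- `bL` is the twisted left action `h • v = χ(h₁⊗v₍1₎)·h₂·v₍2̲₎·χ⁻¹(h₃⊗v₍3₎)` on a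
bicovariant bimodule, expressed via arbitrary finite representations of `Δ₂ h` and of the
two-sided coaction `(id ⊗ β_R)(β_L v) = v₍1₎ ⊗ v₍2̲₎ ⊗ v₍3₎`. -/
def IsTwistedActL (χ χ' : H ⊗[k] H →ₗ[k] k) (aL : H →ₗ[k] Ω →ₗ[k] Ω)
    (βL : Ω →ₗ[k] H ⊗[k] Ω) (βR : Ω →ₗ[k] Ω ⊗[k] H)
    (bL : H →ₗ[k] Ω →ₗ[k] Ω) : Prop :=
  ∀ (h : H) (v : Ω) (ι κ : Type) (s : Finset ι) (t : Finset κ)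
    (h1 h2 h3 : ι → H) (a : κ → H) (w : κ → Ω) (b : κ → H),
    Δ₂ k H h = ∑ i ∈ s, h1 i ⊗ₜ[k] (h2 i ⊗ₜ[k] h3 i) →
    (LinearMap.lTensor H βR) (βL v) = ∑ m ∈ t, a m ⊗ₜ[k] (w m ⊗ₜ[k] b m) →
    bL h v = ∑ i ∈ s, ∑ m ∈ t,
      (χ (h1 i ⊗ₜ[k] a m) * χ' (h3 i ⊗ₜ[k] b m)) • aL (h2 i) (w m)

/-- `bR` is the twisted right action `v • h = χ(v₍1₎⊗h₁)·v₍2̲₎·h₂·χ⁻¹(v₍3₎⊗h₃)`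
(`bR h v = v • h`). -/
def IsTwistedActR (χ χ' : H ⊗[k] H →ₗ[k] k) (aR : H →ₗ[k] Ω →ₗ[k] Ω)
    (βL : Ω →ₗ[k] H ⊗[k] Ω) (βR : Ω →ₗ[k] Ω ⊗[k] H)
    (bR : H →ₗ[k] Ω →ₗ[k] Ω) : Prop :=
  ∀ (h : H) (v : Ω) (ι κ : Type) (s : Finset ι) (t : Finset κ)
    (h1 h2 h3 : ι → H) (a : κ → H) (w : κ → Ω) (b : κ → H),
    Δ₂ k H h = ∑ i ∈ s, h1 i ⊗ₜ[k] (h2 i ⊗ₜ[k] h3 i) →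
    (LinearMap.lTensor H βR) (βL v) = ∑ m ∈ t, a m ⊗ₜ[k] (w m ⊗ₜ[k] b m) →
    bR h v = ∑ i ∈ s, ∑ m ∈ t,
      (χ (a m ⊗ₜ[k] h1 i) * χ' (b m ⊗ₜ[k] h3 i)) • aR (h2 i) (w m)

end PaperTwist

open PaperTwist

/-- Any element of a triple tensor product is a finite sum of pure tensors. -/
lemma rep3 {k A B C : Type} [CommRing k] [AddCommGroup A] [Module k A]
    [AddCommGroup B] [Module k B] [AddCommGroup C] [Module k C]
    (x : A ⊗[k] (B ⊗[k] C)) :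
    ∃ (ι : Type) (s : Finset ι) (a : ι → A) (b : ι → B) (c : ι → C),
      x = ∑ i ∈ s, a i ⊗ₜ[k] (b i ⊗ₜ[k] c i) := by
  obtain ⟨S, hS⟩ := TensorProduct.exists_finset (R := k) x
  choose T hT using fun p : A × (B ⊗[k] C) => TensorProduct.exists_finset (R := k) p.2
  refine ⟨(p : A × (B ⊗[k] C)) × (B × C), S.sigma T,
    fun q => q.1.1, fun q => q.2.1, fun q => q.2.2, ?_⟩
  rw [Finset.sum_sigma, hS]
  refine Finset.sum_congr rfl fun p _ => ?_
  rw [hT p, TensorProduct.tmul_sum]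

/-- Twisting preserves the Leibniz rule: if `d : H → Ω` satisfies the
Leibniz rule for a bicovariant bimodule `Ω` and is a bicomodule map, then for a unital
2-cocycle `χ : H ⊗ H → k` (with convolution inverse `χ'`), the twisted product `m` and
the twisted actions `bL, bR` satisfy `d(h • g) = (dh) • g + h • (dg)`. -/
theorem statement_12
    {k H Ω : Type} [Field k] [Ring H] [HopfAlgebra k H] [AddCommGroup Ω] [Module k Ω]
    (hS : Function.Bijective (S k H))
    (aL aR : H →ₗ[k] Ω →ₗ[k] Ω) (βL : Ω →ₗ[k] H ⊗[k] Ω) (βR : Ω →ₗ[k] Ω ⊗[k] H)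
    (hB : IsBicovariantBimodule k H Ω aL aR βL βR)
    (d : H →ₗ[k] Ω)
    (hLeib : ∀ h g : H, d (h * g) = aR g (d h) + aL h (d g))
    (hdβL : ∀ h : H, βL (d h) = (LinearMap.lTensor H d) (Δ k H h))
    (hdβR : ∀ h : H, βR (d h) = (LinearMap.rTensor H d) (Δ k H h))
    (χ χ' : H ⊗[k] H →ₗ[k] k) (hχ : IsFunCocycle k H χ χ')
    (m : H →ₗ[k] H →ₗ[k] H) (hm : IsTwistedProduct k H χ χ' m)
    (bL bR : H →ₗ[k] Ω →ₗ[k] Ω)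
    (hbL : IsTwistedActL k H Ω χ χ' aL βL βR bL)
    (hbR : IsTwistedActR k H Ω χ χ' aR βL βR bR) :
    ∀ h g : H, d (m h g) = bR g (d h) + bL h (d g) := by
  intro h g
  obtain ⟨ι, s, h1, h2, h3, hh⟩ := rep3 (Δ₂ k H h)
  obtain ⟨κ, t, g1, g2, g3, hg⟩ := rep3 (Δ₂ k H g)
  -- two-sided coaction on `d x` in terms of `Δ₂ x`
  have key : ∀ (x : H), (LinearMap.lTensor H βR) (βL (d x))
      = (LinearMap.lTensor H (LinearMap.rTensor H d)) (Δ₂ k H x) := by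
    intro x
    rw [hdβL x, ← LinearMap.lTensor_comp_apply]
    have e2 : βR ∘ₗ d = (LinearMap.rTensor H d) ∘ₗ Δ k H := LinearMap.ext hdβR
    rw [e2, LinearMap.lTensor_comp, LinearMap.comp_apply]
    rfl
  have keyH : (LinearMap.lTensor H βR) (βL (d h))
      = ∑ i ∈ s, h1 i ⊗ₜ[k] ((d (h2 i)) ⊗ₜ[k] h3 i) := by
    rw [key h, hh, map_sum]
    simp
  have keyG : (LinearMap.lTensor H βR) (βL (d g))
      = ∑ j ∈ t, g1 j ⊗ₜ[k] ((d (g2 j)) ⊗ₜ[k] g3 j) := by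
    rw [key g, hg, map_sum]
    simp
  have hmval := hm h g ι κ s t h1 h2 h3 g1 g2 g3 hh hg
  have hbRval := hbR g (d h) κ ι t s g1 g2 g3 h1 (fun i => d (h2 i)) h3 hg keyH
  have hbLval := hbL h (d g) ι κ s t h1 h2 h3 g1 (fun j => d (g2 j)) g3 hh keyG
  rw [hmval, hbRval, hbLval, map_sum]
  rw [Finset.sum_comm (s := t) (t := s)]
  rw [← Finset.sum_add_distrib]
  refine Finset.sum_congr rfl fun i _ => ?_
  rw [map_sum, ← Finset.sum_add_distrib]
  refine Finset.sum_congr rfl fun j _ => ?_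
  rw [map_smul, hLeib, smul_add]
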